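/- Let f ∈ C²([0,η],ℝ₊) be strictly concave and consider a sub-arc γ of the graph of f with chord 𝒞 of length δ. Suppose δ < min{1/2, 1/(16‖f''‖_∞²)}. Construct, as in the Cantor-type iteration, the two sub-arcs γ₁, γ₂ of γ whose chords 𝒞₁, 𝒞₂ are obtained by removing a centered segment of length δ² from 𝒞 and projecting orthogonally onto γ, and let T₁, T₂ be the right-angled triangles with legs 𝒞₁, 𝒞₂ and hypotenuses contained in 𝒞. Then each hypotenuse has length strictly less than δ/2; in particular T₁ and T₂ are disjoint. -/

import Mathlib

noncomputable section
open Set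

/-- in the frame adapted to a chord `𝒞` of length `δ` of a strictly
concave arc (origin at one endpoint, x-axis along `𝒞`), with
`δ < min{1/2, 1/(16‖f''‖²_∞)}`, the endpoints of the two children sub-arcs project onto
the chord at abscissae `x₁ = (δ−δ²)/2` and `x₂ = (δ+δ²)/2`, with heights
`0 < y₁, y₂ ≤ δ²‖f''‖_∞`.  The triangles `T₁`, `T₂` are right-angled at `(x₁,y₁)` and
`(x₂,y₂)` with hypotenuses `[0,x₄]` and `[x₅,x₃]` on the x-axis, where
`x₄ = (1+(y₁/x₁)²)x₁` and `x₃ − x₅ = (1+(y₂/(x₃−x₂))²)(x₃−x₂)`.  Then each hypotenuse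
has length strictly less than `δ/2`; in particular `x₄ < x₅`, so `T₁` and `T₂` are
disjoint. -/
private lemma stmt10_aux (δ M x y : ℝ) (hδ0 : 0 < δ) (hδhalf : δ < 1 / 2)
    (hδM : 16 * M ^ 2 * δ < 1) (hy : y ^ 2 ≤ δ ^ 4 * M ^ 2)
    (hx : x = (δ - δ ^ 2) / 2) : x ^ 2 + y ^ 2 < (δ / 2) * x := by
  subst hx
  have hδ3 : 0 < δ ^ 3 := by positivity
  nlinarith [mul_pos hδ3 (show (0:ℝ) < 1 - 16 * M ^ 2 * δ by linarith),
    mul_pos hδ3 (show (0:ℝ) < 1 / 2 - δ by linarith)]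

theorem stmt10 (δ M y₁ y₂ : ℝ) (hM : 0 ≤ M)
    (hδ0 : 0 < δ) (hδ : δ < min (1 / 2) (1 / (16 * M ^ 2)))
    (hy₁0 : 0 < y₁) (hy₁ : y₁ ≤ δ ^ 2 * M)
    (hy₂0 : 0 < y₂) (hy₂ : y₂ ≤ δ ^ 2 * M)
    (x₁ x₂ x₃ x₄ x₅ : ℝ)
    (hx₁ : x₁ = (δ - δ ^ 2) / 2) (hx₂ : x₂ = (δ + δ ^ 2) / 2) (hx₃ : x₃ = δ)
    (hx₄ : x₄ = (1 + (y₁ / x₁) ^ 2) * x₁)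
    (hx₅ : x₅ = x₃ - (1 + (y₂ / (x₃ - x₂)) ^ 2) * (x₃ - x₂)) :
    x₄ < x₃ / 2 ∧ x₃ - x₅ < x₃ / 2 ∧ x₄ < x₅ := by
  have hδhalf : δ < 1 / 2 := lt_of_lt_of_le hδ (min_le_left _ _)
  have hM0 : 0 < M := by
    rcases hM.lt_or_eq with h | h
    · exact h
    · exfalso; nlinarith
  have hδM : 16 * M ^ 2 * δ < 1 := by
    have h2 : δ < 1 / (16 * M ^ 2) := lt_of_lt_of_le hδ (min_le_right _ _)
    have h3 : 0 < 16 * M ^ 2 := by positivity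
    calc 16 * M ^ 2 * δ < 16 * M ^ 2 * (1 / (16 * M ^ 2)) := by nlinarith
    _ = 1 := by field_simp
  have hx₁pos : 0 < x₁ := by nlinarith
  have hx₁ne : x₁ ≠ 0 := ne_of_gt hx₁pos
  have hδ3 : 0 < δ ^ 3 := by positivity
  -- first hypotenuse
  have hy₁sq : y₁ ^ 2 ≤ δ ^ 4 * M ^ 2 := by nlinarith
  have key₁ : x₁ ^ 2 + y₁ ^ 2 < (δ / 2) * x₁ := stmt10_aux δ M x₁ y₁ hδ0 hδhalf hδM hy₁sq hx₁
  have hx₄eq : x₄ = (x₁ ^ 2 + y₁ ^ 2) / x₁ := by rw [hx₄]; field_simp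
  have hA : x₄ < x₃ / 2 := by
    rw [hx₄eq, hx₃]
    exact (div_lt_iff₀ hx₁pos).2 (by linarith)
  -- second hypotenuse
  have hx32 : x₃ - x₂ = x₁ := by rw [hx₃, hx₂, hx₁]; ring
  have hy₂sq : y₂ ^ 2 ≤ δ ^ 4 * M ^ 2 := by nlinarith
  have key₂ : x₁ ^ 2 + y₂ ^ 2 < (δ / 2) * x₁ := stmt10_aux δ M x₁ y₂ hδ0 hδhalf hδM hy₂sq hx₁
  have hx₅eq : x₃ - x₅ = (x₁ ^ 2 + y₂ ^ 2) / x₁ := by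
    rw [hx₅, hx32]; field_simp; ring
  have hB : x₃ - x₅ < x₃ / 2 := by
    rw [hx₅eq, hx₃]
    exact (div_lt_iff₀ hx₁pos).2 (by linarith)
  exact ⟨hA, hB, by linarith⟩
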